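/- For a binary quartic form p(x,y) = Σ_{i=0}^4 C(4,i)·b_i·x^{4-i}y^i with real coefficients b_0,…,b_4, p belongs to the dual cone (Σ_{2,4}^2)* if and only if b_0 ≥ 0, b_2 ≥ 0, b_4 ≥ 0, b_0·b_2 ≥ b_1², b_0·b_4 ≥ b_2², and b_2·b_4 ≥ b_3². -/

import Mathlib

open MvPolynomial Finset

/-- The Fischer inner product of two binary quartic forms (`n = 2`, `2d = 4`). -/
noncomputable def fischer4 (p q : MvPolynomial (Fin 2) ℝ) : ℝ :=
  ∑ i ∈ p.support ∪ q.support,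
    (((∏ j, Nat.factorial (i j) : ℕ) : ℝ) / (Nat.factorial 4 : ℝ)) *
      coeff i p * coeff i q

noncomputable def ms (n j : ℕ) : Fin 2 →₀ ℕ :=
  Finsupp.single 0 (n - j) + Finsupp.single 1 j

lemma ms_apply0 (n j : ℕ) : ms n j 0 = n - j := by simp [ms]
lemma ms_apply1 (n j : ℕ) : ms n j 1 = j := by
  simp [ms, Finsupp.single_apply]

lemma deg2 (d : Fin 2 →₀ ℕ) : d.degree = d 0 + d 1 := by
  rw [Finsupp.degree_apply]
  rw [Finset.sum_subset (Finset.subset_univ d.support)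
    (by intro x _ hx; simpa using hx)]
  exact Fin.sum_univ_two d

lemma ms_degree (n j : ℕ) (hj : j ≤ n) : (ms n j).degree = n := by
  rw [deg2, ms_apply0, ms_apply1]; omega

lemma eq_ms (d : Fin 2 →₀ ℕ) (n : ℕ) (hd : d 0 + d 1 = n) : d = ms n (d 1) := by
  ext j; fin_cases j
  · show d 0 = ms n (d 1) 0
    rw [ms_apply0]; omega
  · show d 1 = ms n (d 1) 1
    rw [ms_apply1]

lemma homog_decomp (n : ℕ) (h : MvPolynomial (Fin 2) ℝ) (hh : h.IsHomogeneous n) :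
    h = ∑ j ∈ Finset.range (n + 1), monomial (ms n j) (coeff (ms n j) h) := by
  ext d
  rw [coeff_sum]
  simp only [coeff_monomial]
  by_cases hd : d 0 + d 1 = n
  · have hdd : ms n (d 1) = d := (eq_ms d n hd).symm
    rw [Finset.sum_eq_single (d 1)]
    · rw [if_pos hdd, hdd]
    · intro j _ hj
      rw [if_neg]
      intro hjd
      exact hj (by rw [← hjd, ms_apply1])
    · intro hmem
      exfalso; exact hmem (Finset.mem_range.2 (by omega))
  · rw [Finset.sum_eq_zero, eq_comm]
    · exact (hh.coeff_eq_zero (by rw [deg2]; exact hd)).symm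
    · intro j hj
      rw [if_neg]
      intro hjd
      apply hd
      rw [← hjd, ms_apply0, ms_apply1]
      have := Finset.mem_range.1 hj; omega

lemma support_subset_of_homog4 (q : MvPolynomial (Fin 2) ℝ) (hq : q.IsHomogeneous 4) :
    q.support ⊆ (Finset.range 5).image (ms 4) := by
  intro d hd
  have h1 : d 0 + d 1 = 4 := by
    by_contra hc
    exact (MvPolynomial.mem_support_iff.1 hd) (hq.coeff_eq_zero (by rw [deg2]; exact hc))
  refine Finset.mem_image.2 ⟨d 1, Finset.mem_range.2 (by omega), (eq_ms d 4 h1).symm⟩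

lemma ms_inj (n : ℕ) : ∀ i j, ms n i = ms n j → i = j := by
  intro i j hij
  have := congrArg (fun f => f 1) hij
  simpa [ms_apply1] using this

lemma CXX_eq_monomial (r : ℝ) (a c : ℕ) :
    (C r * X 0 ^ a * X 1 ^ c : MvPolynomial (Fin 2) ℝ) =
      monomial (Finsupp.single 0 a + Finsupp.single 1 c) r := by
  rw [X_pow_eq_monomial, X_pow_eq_monomial, C_apply, monomial_mul, monomial_mul]
  simp

lemma ms_def (n j : ℕ) :
    (Finsupp.single 0 (n - j) + Finsupp.single 1 j : Fin 2 →₀ ℕ) = ms n j := rfl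

lemma hp_coeff (b : Fin 5 → ℝ) (p : MvPolynomial (Fin 2) ℝ)
    (hp : p = ∑ i : Fin 5,
      C ((Nat.choose 4 (i : ℕ) : ℝ) * b i) * X 0 ^ (4 - (i : ℕ)) * X 1 ^ (i : ℕ)) :
    ∀ k : Fin 5, coeff (ms 4 (k : ℕ)) p = (Nat.choose 4 (k : ℕ) : ℝ) * b k := by
  intro k
  rw [hp]
  simp only [CXX_eq_monomial]
  rw [coeff_sum]
  simp only [ms_def, coeff_monomial]
  rw [Finset.sum_eq_single k]
  · rw [if_pos rfl]
  · intro j _ hj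
    rw [if_neg]
    intro hcon
    exact hj (Fin.ext (ms_inj 4 _ _ hcon))
  · simp

lemma hp_homog (b : Fin 5 → ℝ) (p : MvPolynomial (Fin 2) ℝ)
    (hp : p = ∑ i : Fin 5,
      C ((Nat.choose 4 (i : ℕ) : ℝ) * b i) * X 0 ^ (4 - (i : ℕ)) * X 1 ^ (i : ℕ)) :
    p.IsHomogeneous 4 := by
  rw [hp]
  apply IsHomogeneous.sum
  intro i _
  rw [CXX_eq_monomial, ms_def]
  exact isHomogeneous_monomial _ (ms_degree 4 i (by omega))

lemma fischer4_formula (p q : MvPolynomial (Fin 2) ℝ)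
    (hph : p.IsHomogeneous 4) (hqh : q.IsHomogeneous 4) :
    fischer4 p q = ∑ j ∈ Finset.range 5,
      (((4 - j).factorial * j.factorial : ℕ) : ℝ) / 24 *
        coeff (ms 4 j) p * coeff (ms 4 j) q := by
  rw [fischer4]
  rw [Finset.sum_subset (Finset.union_subset (support_subset_of_homog4 p hph)
      (support_subset_of_homog4 q hqh))]
  · rw [Finset.sum_image (fun i hi j hj hij => ms_inj 4 i j hij)]
    apply Finset.sum_congr rfl
    intro j _
    have : (∏ i, (ms 4 j i).factorial) = (4 - j).factorial * j.factorial := by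
      rw [Fin.prod_univ_two, ms_apply0, ms_apply1]
    rw [this]
    norm_num [Nat.factorial, Nat.choose]
  · intro x _ hx
    have : coeff x p = 0 := by
      by_contra hc
      exact hx (Finset.mem_union_left _ (MvPolynomial.mem_support_iff.2 hc))
    rw [this]; ring

noncomputable def hform (a c e : ℝ) : MvPolynomial (Fin 2) ℝ :=
  monomial (ms 2 0) a + monomial (ms 2 1) c + monomial (ms 2 2) e

lemma ms_add {m n i j : ℕ} (hi : i ≤ m) (hj : j ≤ n) :
    ms m i + ms n j = ms (m + n) (i + j) := by
  ext k; fin_cases k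
  · show ms m i 0 + ms n j 0 = ms (m + n) (i + j) 0
    rw [ms_apply0, ms_apply0, ms_apply0]; omega
  · show ms m i 1 + ms n j 1 = ms (m + n) (i + j) 1
    rw [ms_apply1, ms_apply1, ms_apply1]

lemma ms4_eq_iff (i j : ℕ) : ms 4 i = ms 4 j ↔ i = j :=
  ⟨ms_inj 4 i j, by rintro rfl; rfl⟩

lemma hform_homog (a c e : ℝ) : (hform a c e).IsHomogeneous 2 := by
  refine IsHomogeneous.add (IsHomogeneous.add ?_ ?_) ?_ <;>
    exact isHomogeneous_monomial _ (ms_degree 2 _ (by omega))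

lemma hform_sq (a c e : ℝ) : (hform a c e) ^ 2 =
    monomial (ms 4 0) (a * a) + monomial (ms 4 1) (a * c + c * a) +
    monomial (ms 4 2) (c * c + (a * e + e * a)) + monomial (ms 4 3) (c * e + e * c) +
    monomial (ms 4 4) (e * e) := by
  have h00 : ms 2 0 + ms 2 0 = ms 4 0 := by simpa using ms_add (m := 2) (n := 2) (i := 0) (j := 0) (by omega) (by omega)
  have h01 : ms 2 0 + ms 2 1 = ms 4 1 := by simpa using ms_add (m := 2) (n := 2) (i := 0) (j := 1) (by omega) (by omega)
  have h10 : ms 2 1 + ms 2 0 = ms 4 1 := by simpa using ms_add (m := 2) (n := 2) (i := 1) (j := 0) (by omega) (by omega)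
  have h11 : ms 2 1 + ms 2 1 = ms 4 2 := by simpa using ms_add (m := 2) (n := 2) (i := 1) (j := 1) (by omega) (by omega)
  have h02 : ms 2 0 + ms 2 2 = ms 4 2 := by simpa using ms_add (m := 2) (n := 2) (i := 0) (j := 2) (by omega) (by omega)
  have h20 : ms 2 2 + ms 2 0 = ms 4 2 := by simpa using ms_add (m := 2) (n := 2) (i := 2) (j := 0) (by omega) (by omega)
  have h12 : ms 2 1 + ms 2 2 = ms 4 3 := by simpa using ms_add (m := 2) (n := 2) (i := 1) (j := 2) (by omega) (by omega)
  have h21 : ms 2 2 + ms 2 1 = ms 4 3 := by simpa using ms_add (m := 2) (n := 2) (i := 2) (j := 1) (by omega) (by omega)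
  have h22 : ms 2 2 + ms 2 2 = ms 4 4 := by simpa using ms_add (m := 2) (n := 2) (i := 2) (j := 2) (by omega) (by omega)
  rw [hform, sq]
  simp only [add_mul, mul_add, monomial_mul, h00, h01, h10, h11, h02, h20, h12, h21, h22,
    map_add]
  abel

lemma coeff_hform_sq (a c e : ℝ) :
    coeff (ms 4 0) ((hform a c e) ^ 2) = a * a ∧
    coeff (ms 4 1) ((hform a c e) ^ 2) = a * c + c * a ∧
    coeff (ms 4 2) ((hform a c e) ^ 2) = c * c + (a * e + e * a) ∧
    coeff (ms 4 3) ((hform a c e) ^ 2) = c * e + e * c ∧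
    coeff (ms 4 4) ((hform a c e) ^ 2) = e * e := by
  rw [hform_sq]
  simp only [coeff_add, coeff_monomial, ms4_eq_iff]
  norm_num

lemma master (b : Fin 5 → ℝ) (p : MvPolynomial (Fin 2) ℝ)
    (hp : p = ∑ i : Fin 5,
      C ((Nat.choose 4 (i : ℕ) : ℝ) * b i) * X 0 ^ (4 - (i : ℕ)) * X 1 ^ (i : ℕ))
    (a c e : ℝ) :
    fischer4 p ((hform a c e) ^ 2) =
      b 0 * a ^ 2 + 2 * b 1 * a * c + b 2 * c ^ 2 + 2 * b 2 * a * e +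
        2 * b 3 * c * e + b 4 * e ^ 2 := by
  obtain ⟨k0, k1, k2, k3, k4⟩ := coeff_hform_sq a c e
  rw [fischer4_formula p _ (hp_homog b p hp) ((hform_homog a c e).pow 2)]
  rw [Finset.sum_range_succ, Finset.sum_range_succ, Finset.sum_range_succ,
    Finset.sum_range_succ, Finset.sum_range_succ, Finset.sum_range_zero]
  rw [k0, k1, k2, k3, k4]
  have c0 := hp_coeff b p hp 0
  have c1 := hp_coeff b p hp 1
  have c2 := hp_coeff b p hp 2
  have c3 := hp_coeff b p hp 3
  have c4 := hp_coeff b p hp 4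
  norm_num [show ((0 : Fin 5) : ℕ) = 0 from rfl, show ((1 : Fin 5) : ℕ) = 1 from rfl,
    show ((2 : Fin 5) : ℕ) = 2 from rfl, show ((3 : Fin 5) : ℕ) = 3 from rfl,
    show ((4 : Fin 5) : ℕ) = 4 from rfl] at c0 c1 c2 c3 c4
  rw [c0, c1, c2, c3, c4]
  norm_num [Nat.factorial, Nat.choose]
  ring

lemma quad_nonneg (u v w x y : ℝ) (hu : 0 ≤ u) (hw : 0 ≤ w) (hv : v ^ 2 ≤ u * w) :
    0 ≤ u * x ^ 2 + 2 * v * x * y + w * y ^ 2 := by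
  rcases eq_or_lt_of_le hu with h | h
  · have hv0 : v = 0 := by nlinarith [sq_nonneg v]
    rw [hv0, ← h]
    nlinarith [mul_nonneg hw (sq_nonneg y)]
  · nlinarith [sq_nonneg (u * x + v * y), mul_nonneg (sub_nonneg.mpr hv) (sq_nonneg y)]

lemma hform_card (a c e : ℝ) (h0 : a = 0 ∨ c = 0 ∨ e = 0) :
    (hform a c e).support.card ≤ 2 := by
  have key : ∀ (q r : MvPolynomial (Fin 2) ℝ) (s t : Fin 2 →₀ ℕ) (u v : ℝ),
      q = monomial s u + monomial t v → q.support.card ≤ 2 := by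
    intro q r s t u v hq
    calc q.support.card ≤ ((monomial s u).support ∪ (monomial t v).support).card :=
          Finset.card_le_card (hq ▸ MvPolynomial.support_add)
      _ ≤ (monomial s u).support.card + (monomial t v).support.card :=
          Finset.card_union_le _ _
      _ ≤ 1 + 1 := by
          gcongr <;> exact (Finset.card_le_card (support_monomial_subset)).trans (by simp)
      _ = 2 := rfl
  rcases h0 with h | h | h <;> subst h
  · exact key _ 0 (ms 2 1) (ms 2 2) c e (by rw [hform, monomial_zero, zero_add])
  · exact key _ 0 (ms 2 0) (ms 2 2) a e (by rw [hform, monomial_zero, add_zero])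
  · exact key _ 0 (ms 2 0) (ms 2 1) a c (by rw [hform, monomial_zero, add_zero])

lemma homog2_eq_hform (h : MvPolynomial (Fin 2) ℝ) (hh : h.IsHomogeneous 2) :
    h = hform (coeff (ms 2 0) h) (coeff (ms 2 1) h) (coeff (ms 2 2) h) := by
  conv_lhs => rw [homog_decomp 2 h hh]
  rw [hform]
  rw [show (2 : ℕ) + 1 = 3 from rfl, Finset.sum_range_succ, Finset.sum_range_succ,
    Finset.sum_range_succ, Finset.sum_range_zero, zero_add]

theorem binary_quartic_dual_sigma_two (b : Fin 5 → ℝ)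
    (p : MvPolynomial (Fin 2) ℝ)
    (hp : p = ∑ i : Fin 5,
      C ((Nat.choose 4 (i : ℕ) : ℝ) * b i) * X 0 ^ (4 - (i : ℕ)) * X 1 ^ (i : ℕ)) :
    (∀ h : MvPolynomial (Fin 2) ℝ, h.IsHomogeneous 2 → h.support.card ≤ 2 →
        0 ≤ fischer4 p (h ^ 2)) ↔
    (0 ≤ b 0 ∧ 0 ≤ b 2 ∧ 0 ≤ b 4 ∧
      b 1 ^ 2 ≤ b 0 * b 2 ∧ b 2 ^ 2 ≤ b 0 * b 4 ∧ b 3 ^ 2 ≤ b 2 * b 4) := by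
  constructor
  · intro H
    have key : ∀ a c e : ℝ, a = 0 ∨ c = 0 ∨ e = 0 →
        0 ≤ b 0 * a ^ 2 + 2 * b 1 * a * c + b 2 * c ^ 2 + 2 * b 2 * a * e +
          2 * b 3 * c * e + b 4 * e ^ 2 := by
      intro a c e h0
      rw [← master b p hp a c e]
      exact H _ (hform_homog a c e) (hform_card a c e h0)
    have h0 : 0 ≤ b 0 := by have := key 1 0 0 (by norm_num); nlinarith
    have h2 : 0 ≤ b 2 := by have := key 0 1 0 (by norm_num); nlinarith
    have h4 : 0 ≤ b 4 := by have := key 0 0 1 (by norm_num); nlinarith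
    have d1 : b 1 ^ 2 ≤ b 0 * b 2 := by
      have hd := discrim_le_zero (a := b 2) (b := 2 * b 1) (c := b 0) (fun x => by
        have := key 1 x 0 (by norm_num); nlinarith)
      rw [discrim] at hd; nlinarith
    have d2 : b 2 ^ 2 ≤ b 0 * b 4 := by
      have hd := discrim_le_zero (a := b 4) (b := 2 * b 2) (c := b 0) (fun x => by
        have := key 1 0 x (by norm_num); nlinarith)
      rw [discrim] at hd; nlinarith
    have d3 : b 3 ^ 2 ≤ b 2 * b 4 := by
      have hd := discrim_le_zero (a := b 4) (b := 2 * b 3) (c := b 2) (fun x => by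
        have := key 0 1 x (by norm_num); nlinarith)
      rw [discrim] at hd; nlinarith
    exact ⟨h0, h2, h4, d1, d2, d3⟩
  · rintro ⟨h0, h2, h4, d1, d2, d3⟩ h hhom hcard
    set a := coeff (ms 2 0) h with ha_def
    set c := coeff (ms 2 1) h with hc_def
    set e := coeff (ms 2 2) h with he_def
    have hdec := homog2_eq_hform h hhom
    have hz : a = 0 ∨ c = 0 ∨ e = 0 := by
      by_contra hcon
      push_neg at hcon
      obtain ⟨ha, hc, he⟩ := hcon
      have hsub : ({ms 2 0, ms 2 1, ms 2 2} : Finset (Fin 2 →₀ ℕ)) ⊆ h.support := by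
        intro d hd
        simp only [Finset.mem_insert, Finset.mem_singleton] at hd
        rcases hd with rfl | rfl | rfl <;> exact MvPolynomial.mem_support_iff.2 ‹_›
      have hcard3 : ({ms 2 0, ms 2 1, ms 2 2} : Finset (Fin 2 →₀ ℕ)).card = 3 := by
        rw [Finset.card_insert_of_notMem, Finset.card_insert_of_notMem,
          Finset.card_singleton]
        · simp only [Finset.mem_singleton]
          intro hcon2
          exact (by omega : (1 : ℕ) ≠ 2) (ms_inj 2 1 2 hcon2)
        · simp only [Finset.mem_insert, Finset.mem_singleton]
          rintro (hcon2 | hcon2)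
          exacts [(by omega : (0 : ℕ) ≠ 1) (ms_inj 2 0 1 hcon2),
            (by omega : (0 : ℕ) ≠ 2) (ms_inj 2 0 2 hcon2)]
      have := Finset.card_le_card hsub
      omega
    rw [hdec, master b p hp, ← ha_def, ← hc_def, ← he_def]
    rcases hz with hzz | hzz | hzz <;> rw [hzz]
    · nlinarith [quad_nonneg (b 2) (b 3) (b 4) c e h2 h4 d3]
    · nlinarith [quad_nonneg (b 0) (b 2) (b 4) a e h0 h4 d2]
    · nlinarith [quad_nonneg (b 0) (b 1) (b 2) a c h0 h2 d1]
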